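/- Let f : R^n -> R be a convex function with \int e^f d\gamma_n = 1, where \gamma_n is the standard Gaussian measure on R^n. Then f(x) \le |x|^2/2 for all x in R^n. -/

import Mathlib

open MeasureTheory Real Set
open scoped RealInnerProductSpace ENNReal NNReal

noncomputable def stdGaussian (n : ℕ) : Measure (EuclideanSpace ℝ (Fin n)) :=
  volume.withDensity (fun x => ENNReal.ofReal ((2 * π) ^ (-(n : ℝ) / 2) * Real.exp (-‖x‖ ^ 2 / 2)))

noncomputable def Phibar (s : ℝ) : ℝ :=
  (Real.sqrt (2 * π))⁻¹ * ∫ x in Set.Ioi s, Real.exp (-x ^ 2 / 2)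

lemma gauss_mgf (n : ℕ) (w : EuclideanSpace ℝ (Fin n)) :
    ∫ x : EuclideanSpace ℝ (Fin n), Real.exp (-(1/2) * ‖x‖ ^ 2 + ⟪w, x⟫) =
      (2 * π) ^ ((n : ℝ) / 2) * Real.exp (‖w‖ ^ 2 / 2) := by
  have h := GaussianFourier.integral_cexp_neg_mul_sq_norm_add (V := EuclideanSpace ℝ (Fin n))
    (b := (1/2 : ℂ)) (by norm_num) 1 w
  have hL : (∫ x : EuclideanSpace ℝ (Fin n),
        Complex.exp (-(1/2 : ℂ) * (‖x‖:ℂ) ^ 2 + 1 * (⟪w, x⟫ : ℂ)))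
      = ((∫ x : EuclideanSpace ℝ (Fin n), Real.exp (-(1/2) * ‖x‖ ^ 2 + ⟪w, x⟫) : ℝ) : ℂ) := by
    have h0 : ((∫ x : EuclideanSpace ℝ (Fin n), Real.exp (-(1/2) * ‖x‖ ^ 2 + ⟪w, x⟫) : ℝ) : ℂ)
        = ∫ x : EuclideanSpace ℝ (Fin n),
            ((Real.exp (-(1/2) * ‖x‖ ^ 2 + ⟪w, x⟫) : ℝ) : ℂ) := by
      change Complex.ofRealLI _ = _
      rw [← Complex.ofRealLI.integral_comp_comm]
      simp [Complex.ofRealLI]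
      congr 1
      ext x
      change ((rexp _ : ℝ) : ℂ) = _
      push_cast
      rfl
    rw [h0]
    congr 1
    ext x
    rw [Complex.ofReal_exp]
    push_cast
    ring_nf
  rw [← Complex.ofReal_inj, ← hL, h]
  have hfr : ((Module.finrank ℝ (EuclideanSpace ℝ (Fin n)) : ℕ) : ℂ) = (n : ℂ) := by
    simp [finrank_euclideanSpace_fin]
  have h2 : (↑π / (1/2 : ℂ)) = ((2 * π : ℝ) : ℂ) := by push_cast; ring
  rw [hfr, h2]
  have e1 : ((2*π : ℝ) : ℂ) ^ ((n:ℂ)/2) = (((2*π:ℝ)^((n:ℝ)/2) : ℝ) : ℂ) := by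
    rw [Complex.ofReal_cpow (by positivity)]
    push_cast
    ring_nf
  have e2 : Complex.exp (1^2 * (‖w‖:ℂ)^2/(4*(1/2))) = ((rexp (‖w‖^2/2) : ℝ) : ℂ) := by
    rw [Complex.ofReal_exp]
    congr 1
    push_cast
    ring
  rw [e1, e2, ← Complex.ofReal_mul]

lemma exists_subgradient {n : ℕ} {f : EuclideanSpace ℝ (Fin n) → ℝ}
    (hconv : ConvexOn ℝ Set.univ f) (x₀ : EuclideanSpace ℝ (Fin n)) :
    ∃ v : EuclideanSpace ℝ (Fin n), ∀ x, f x₀ + ⟪v, x - x₀⟫ ≤ f x := by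
  have hcont : Continuous f :=
    continuousOn_univ.mp (hconv.continuousOn isOpen_univ)
  set S : Set (EuclideanSpace ℝ (Fin n) × ℝ) := {p | f p.1 < p.2} with hS
  have hSopen : IsOpen S := isOpen_lt (hcont.comp continuous_fst) continuous_snd
  have hSconv : Convex ℝ S := by
    intro p hp q hq a b ha hb hab
    simp only [hS, mem_setOf_eq] at *
    have hc := hconv.2 (mem_univ p.1) (mem_univ q.1) ha hb hab
    simp only [smul_eq_mul] at hc
    calc f (a • p.1 + b • q.1) ≤ a * f p.1 + b * f q.1 := hc
      _ < a * p.2 + b * q.2 := by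
          rcases eq_or_lt_of_le ha with rfl | ha'
          · have : b = 1 := by linarith
            subst this; simpa using hq
          · rcases eq_or_lt_of_le hb with rfl | hb'
            · have : a = 1 := by linarith
              subst this; simpa using hp
            · have h1 := mul_lt_mul_of_pos_left hp ha'
              have h2 := mul_lt_mul_of_pos_left hq hb'
              linarith
      _ = (a • p + b • q).2 := rfl
  have hx₀ : (x₀, f x₀) ∉ S := by simp [hS]
  obtain ⟨φ, hφ⟩ := geometric_hahn_banach_open_point hSconv hSopen hx₀
  set c := φ (0, 1) with hc
  have key : ∀ (x : EuclideanSpace ℝ (Fin n)) (t : ℝ), f x < t → φ (x, t) < φ (x₀, f x₀) :=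
    fun x t ht => hφ _ ht
  have hsplit : ∀ (x : EuclideanSpace ℝ (Fin n)) (t : ℝ), φ (x, t) = φ (x, 0) + t * c := by
    intro x t
    have h0 : (x, t) = (x, 0) + t • ((0 : EuclideanSpace ℝ (Fin n)), (1 : ℝ)) := by
      simp [Prod.ext_iff]
    rw [h0, map_add, φ.map_smul]
    simp [hc, smul_eq_mul]
  have hclt : c < 0 := by
    have h1 := key x₀ (f x₀ + 1) (by linarith)
    rw [hsplit x₀ (f x₀ + 1), hsplit x₀ (f x₀)] at h1
    linarith
  have hle : ∀ x : EuclideanSpace ℝ (Fin n), φ (x, 0) + f x * c ≤ φ (x₀, 0) + f x₀ * c := by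
    intro x
    by_contra hcon
    push_neg at hcon
    set ε := (φ (x, 0) + f x * c - (φ (x₀, 0) + f x₀ * c)) / (-c) with hε
    have hεpos : 0 < ε := div_pos (by linarith) (by linarith)
    have h1 := key x (f x + ε) (by linarith)
    rw [hsplit x (f x + ε), hsplit x₀ (f x₀)] at h1
    have h5 : ε * -c = φ (x, 0) + f x * c - (φ (x₀, 0) + f x₀ * c) := by
      rw [hε, div_mul_cancel₀]
      exact ne_of_gt (by linarith)
    nlinarith
  set T : EuclideanSpace ℝ (Fin n) →L[ℝ] ℝ :=
    φ.comp (ContinuousLinearMap.inl ℝ (EuclideanSpace ℝ (Fin n)) ℝ) with hT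
  refine ⟨(InnerProductSpace.toDual ℝ (EuclideanSpace ℝ (Fin n))).symm ((-c)⁻¹ • T),
    fun x => ?_⟩
  rw [InnerProductSpace.toDual_symm_apply]
  have h1 := hle x
  have hTx : T (x - x₀) = φ (x, 0) - φ (x₀, 0) := by
    simp only [hT, ContinuousLinearMap.comp_apply, ContinuousLinearMap.inl_apply]
    rw [show ((x - x₀ : EuclideanSpace ℝ (Fin n)), (0:ℝ)) = (x, 0) - (x₀, 0) by
      simp [Prod.ext_iff], map_sub]
  have h6 : ((-c)⁻¹ • T) (x - x₀) = (-c)⁻¹ * (φ (x, 0) - φ (x₀, 0)) := by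
    simp [hTx, smul_eq_mul]
  rw [h6]
  have h2 : (φ (x, 0) - φ (x₀, 0)) ≤ (f x₀ - f x) * c := by linarith
  have h3 : (-c)⁻¹ * (φ (x, 0) - φ (x₀, 0)) ≤ (-c)⁻¹ * ((f x₀ - f x) * c) := by
    apply mul_le_mul_of_nonneg_left h2
    rw [inv_nonneg]
    linarith
  have h4 : (-c)⁻¹ * ((f x₀ - f x) * c) = f x - f x₀ := by
    have : c ≠ 0 := ne_of_lt hclt
    field_simp
    ring
  linarith

lemma stdGaussian_integral_exp_affine (n : ℕ) (v x₀ : EuclideanSpace ℝ (Fin n)) (C : ℝ) :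
    ∫ x, Real.exp (C + ⟪v, x - x₀⟫) ∂(stdGaussian n)
      = Real.exp (C - ⟪v, x₀⟫ + ‖v‖ ^ 2 / 2) := by
  set ρ : EuclideanSpace ℝ (Fin n) → ℝ :=
    fun x => (2 * π) ^ (-(n : ℝ) / 2) * Real.exp (-‖x‖ ^ 2 / 2) with hρ
  have hρnn : ∀ x, 0 ≤ ρ x := fun x => by positivity
  have hρcont : Continuous ρ := by
    apply Continuous.mul continuous_const
    exact Real.continuous_exp.comp (by continuity)
  have hmeas : Measurable fun x : EuclideanSpace ℝ (Fin n) => (ρ x).toNNReal :=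
    hρcont.measurable.real_toNNReal
  have hsG : stdGaussian n
      = volume.withDensity (fun x => ((ρ x).toNNReal : ℝ≥0∞)) := by
    unfold stdGaussian
    rfl
  rw [hsG, integral_withDensity_eq_integral_smul hmeas]
  have hint : ∀ x : EuclideanSpace ℝ (Fin n),
      (ρ x).toNNReal • Real.exp (C + ⟪v, x - x₀⟫)
        = ((2 * π) ^ (-(n : ℝ) / 2) * Real.exp (C - ⟪v, x₀⟫))
            * Real.exp (-(1/2) * ‖x‖ ^ 2 + ⟪v, x⟫) := by
    intro x
    have hcoe : ((ρ x).toNNReal : ℝ) = ρ x := Real.coe_toNNReal _ (hρnn x)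
    rw [NNReal.smul_def, smul_eq_mul, hcoe, hρ]
    simp only
    rw [inner_sub_right]
    rw [mul_assoc, ← Real.exp_add, mul_assoc, ← Real.exp_add]
    congr 2
    ring
  simp only [hint]
  rw [integral_const_mul, gauss_mgf]
  rw [mul_mul_mul_comm, ← Real.rpow_add (by positivity), ← Real.exp_add,
    show (-(n:ℝ)/2 + (n:ℝ)/2) = 0 by ring, Real.rpow_zero, one_mul]

theorem pointwise_bound_convex (n : ℕ) (f : EuclideanSpace ℝ (Fin n) → ℝ)
    (hconv : ConvexOn ℝ Set.univ f)
    (hint : ∫ x, Real.exp (f x) ∂(stdGaussian n) = 1) :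
    ∀ x, f x ≤ ‖x‖ ^ 2 / 2 := by
  intro x₀
  obtain ⟨v, hv⟩ := exists_subgradient hconv x₀
  have hInt : Integrable (fun x => Real.exp (f x)) (stdGaussian n) := by
    by_contra h
    rw [integral_undef h] at hint
    norm_num at hint
  have hmono : ∫ x, Real.exp (f x₀ + ⟪v, x - x₀⟫) ∂(stdGaussian n) ≤ 1 := by
    rw [← hint]
    apply integral_mono_of_nonneg
    · filter_upwards with x
      positivity
    · exact hInt
    · filter_upwards with x
      exact Real.exp_le_exp.mpr (hv x)
  rw [stdGaussian_integral_exp_affine] at hmono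
  rw [Real.exp_le_one_iff] at hmono
  have hnorm : ‖v - x₀‖ ^ 2 = ‖v‖ ^ 2 - 2 * ⟪v, x₀⟫ + ‖x₀‖ ^ 2 :=
    norm_sub_sq_real v x₀
  have h0 : (0:ℝ) ≤ ‖v - x₀‖ ^ 2 := sq_nonneg _
  linarith
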